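/- With the same hypotheses on ν, r, V as above: if β + (k+1)/r < β' ≤ 1 for k ∈ {0,…,⌊r⌋−1}, then α ↦ P_{k,α} is continuously differentiable from (−a₀,a₀) to L(B_β, B_{β'}) with derivative P_{k+1,α}; quantitatively, with σ = r(β'−β) − (k+1) ∈ (0,1], ‖P_{k,α}f − P_{k,α'}f − (α−α')P_{k+1,α'}f‖_{β'} ≤ 2AB |α−α'|^{1+σ} ‖f‖_β for all α,α' ∈ (−a₀,a₀) and f ∈ B_β. -/

import Mathlib

open MeasureTheory Set

/-- The formal derivative operators `P_{k,α} f(x) = (-1)^k x^k ∫ f(y) ν^{(k)}(y-αx) dy` of the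
AR(1) transition operator. -/
noncomputable def arOpD (ν : ℝ → ℝ) (k : ℕ) (α : ℝ) (f : ℝ → ℝ) (x : ℝ) : ℝ :=
  (-1 : ℝ) ^ k * x ^ k * ∫ y, f y * iteratedDeriv k ν (y - α * x)

/-- Taylor identity with integral remainder, first order. -/
lemma taylor_aux (g g' g'' : ℝ → ℝ) (a b : ℝ)
    (hg : ∀ s : ℝ, HasDerivAt g (g' s) s)
    (hg' : ∀ s : ℝ, HasDerivAt g' (g'' s) s)
    (hc' : Continuous g') (hc'' : Continuous g'') :
    g b - g a - (b - a) * g' a = ∫ s in a..b, (b - s) * g'' s := by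
  have hu : ∀ s ∈ uIcc a b, HasDerivAt (fun s : ℝ => b - s) (-1 : ℝ) s := by
    intro s _; simpa using (hasDerivAt_id s).const_sub b
  have hby := intervalIntegral.integral_mul_deriv_eq_deriv_mul hu
    (fun s _ => hg' s) (continuous_const.intervalIntegrable a b)
    (hc''.intervalIntegrable a b)
  have hftc : ∫ s in a..b, g' s = g b - g a :=
    intervalIntegral.integral_eq_sub_of_hasDerivAt (fun s _ => hg s)
      (hc'.intervalIntegrable a b)
  have h2 : ∫ s in a..b, (-1 : ℝ) * g' s = -(g b - g a) := by
    rw [intervalIntegral.integral_const_mul, hftc]; ring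
  rw [hby, h2]
  ring


set_option maxHeartbeats 4000000 in
/-- Lemma 2.2 (ii), quantitative form: differentiability of `α ↦ P_{k,α}`
from `B_β` to `B_{β'}` with derivative `P_{k+1,α}` when `β + (k+1)/r < β' ≤ 1`, with
`σ = r(β'-β) - (k+1) ∈ (0,1]`:
`‖P_{k,α}f - P_{k,α'}f - (α-α')P_{k+1,α'}f‖_{β'} ≤ 2AB|α-α'|^{1+σ}‖f‖_β`. -/
theorem stmt16 (ν : ℝ → ℝ) (hpos : ∀ t, 0 < ν t)
    (hint : Integrable ν) (hmass : ∫ x, ν x = 1)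
    (r : ℝ) (hr : 1 ≤ r) (hrnotint : ∀ n : ℕ, (n : ℝ) ≠ r)
    (hsmooth : ContDiff ℝ ((Nat.floor r + 1 : ℕ) : ℕ∞) ν)
    (A : ℝ) (hA : ∀ j ≤ Nat.floor r + 1, ∀ t, |iteratedDeriv j ν t| ≤ A * ν t)
    (a₀ : ℝ) (ha₀ : a₀ ∈ Set.Ioo (0 : ℝ) 1)
    (β β' : ℝ) (hβ : 0 ≤ β) (k : ℕ) (hk : k + 1 ≤ Nat.floor r)
    (hββ' : β + ((k : ℝ) + 1) / r < β') (hβ'1 : β' ≤ 1)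
    (σ : ℝ) (hσdef : σ = r * (β' - β) - (k + 1)) (hσ : σ ∈ Set.Ioc (0 : ℝ) 1)
    (B : ℝ)
    (hBint : ∀ α ∈ Set.Icc (-a₀) a₀, ∀ x : ℝ,
      Integrable (fun y => ((1 + |y|) ^ r) ^ β * ν (y - α * x)))
    (hB : ∀ α ∈ Set.Icc (-a₀) a₀, ∀ x : ℝ,
      (∫ y, ((1 + |y|) ^ r) ^ β * ν (y - α * x)) ≤ B * ((1 + |x|) ^ r) ^ β)
    (f : ℝ → ℝ) (hfm : Measurable f) (F : ℝ) (hF : 0 ≤ F)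
    (hf : ∀ y, |f y| ≤ F * ((1 + |y|) ^ r) ^ β)
    (α α' : ℝ) (hα : α ∈ Set.Ioo (-a₀) a₀) (hα' : α' ∈ Set.Ioo (-a₀) a₀) (x : ℝ) :
    |arOpD ν k α f x - arOpD ν k α' f x - (α - α') * arOpD ν (k + 1) α' f x|
      ≤ 2 * A * B * |α - α'| ^ (1 + σ) * F * ((1 + |x|) ^ r) ^ β' := by
  -- trivial case α = α'
  rcases eq_or_ne α α' with hEq | hNe
  · subst hEq
    have h1σ : (1 : ℝ) + σ ≠ 0 := by have := hσ.1; intro h; linarith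
    simp [sub_self, Real.zero_rpow h1σ]
  -- notation
  set W : ℝ → ℝ := fun y => ((1 + |y|) ^ r) ^ β with hWdef
  set δ : ℝ := |α - α'| with hδdef
  have hδpos : 0 < δ := abs_pos.mpr (sub_ne_zero.mpr hNe)
  set m : ℝ := min α α' with hmdef
  set M : ℝ := max α α' with hMdef
  have hmM : m ≤ M := min_le_max
  have hMm : M - m = δ := by
    rw [hMdef, hmdef, hδdef, max_sub_min_eq_abs, abs_sub_comm]
  have hmemα : α ∈ Set.Icc (-a₀) a₀ := ⟨le_of_lt hα.1, le_of_lt hα.2⟩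
  have hmemα' : α' ∈ Set.Icc (-a₀) a₀ := ⟨le_of_lt hα'.1, le_of_lt hα'.2⟩
  have hsubIcc : Set.Icc m M ⊆ Set.Icc (-a₀) a₀ := by
    intro s hs
    constructor
    · exact le_trans (le_min hmemα.1 hmemα'.1) hs.1
    · exact le_trans hs.2 (max_le hmemα.2 hmemα'.2)
  have hνc : Continuous ν := hsmooth.continuous
  have hcj : ∀ j, j ≤ Nat.floor r + 1 → Continuous (iteratedDeriv j ν) := by
    intro j hj
    exact hsmooth.continuous_iteratedDeriv j (by exact_mod_cast hj)
  have hdiffj : ∀ j, j < Nat.floor r + 1 → Differentiable ℝ (iteratedDeriv j ν) := by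
    intro j hj
    exact hsmooth.differentiable_iteratedDeriv j (by exact_mod_cast hj)
  have hA0 : 0 < A := by
    have h := hA 0 (by omega) 0
    rw [iteratedDeriv_zero, abs_of_pos (hpos 0)] at h
    nlinarith [hpos 0]
  have hW1 : ∀ y, (1 : ℝ) ≤ W y := by
    intro y
    have h1 : (1 : ℝ) ≤ (1 + |y|) ^ r := by
      calc (1:ℝ) = 1 ^ r := (Real.one_rpow r).symm
      _ ≤ (1 + |y|) ^ r := Real.rpow_le_rpow zero_le_one (by nlinarith [abs_nonneg y]) (by linarith)
    calc (1:ℝ) = 1 ^ β := (Real.one_rpow β).symm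
    _ ≤ ((1 + |y|) ^ r) ^ β := Real.rpow_le_rpow zero_le_one h1 hβ
  have hB1 : 1 ≤ B := by
    have h0 : (0:ℝ) ∈ Set.Icc (-a₀) a₀ := by
      constructor <;> nlinarith [ha₀.1]
    have hi := hBint 0 h0 0
    have hb := hB 0 h0 0
    simp only [zero_mul, sub_zero] at hi hb
    have h1 : (1:ℝ) ≤ ∫ y, ((1 + |y|) ^ r) ^ β * ν y := by
      have hmono : ∫ y, ν y ≤ ∫ y, ((1 + |y|) ^ r) ^ β * ν y := by
        refine integral_mono hint hi fun y => ?_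
        nlinarith [hpos y, hW1 y]
      linarith [hmass.ge, hmass.le, hmono]
    have h2 : ((1 + |(0:ℝ)|) ^ r) ^ β = 1 := by
      simp [Real.one_rpow]
    rw [h2] at hb
    linarith
  -- integrability and integral bounds
  have hmsub : ∀ s : ℝ, Measurable fun y : ℝ => y - s * x :=
    fun s => measurable_id.sub_const (s * x)
  have hptw : ∀ j, j ≤ Nat.floor r + 1 → ∀ s : ℝ, ∀ y : ℝ,
      ‖f y * iteratedDeriv j ν (y - s * x)‖ ≤ F * A * (W y * ν (y - s * x)) := by
    intro j hj s y
    rw [Real.norm_eq_abs, abs_mul]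
    have h1 := hf y
    have h2 := hA j hj (y - s * x)
    have h3 := hpos (y - s * x)
    have h4 := hW1 y
    nlinarith [abs_nonneg (f y), abs_nonneg (iteratedDeriv j ν (y - s * x))]
  have hII : ∀ j, j ≤ Nat.floor r + 1 → ∀ s ∈ Set.Icc (-a₀) a₀,
      Integrable (fun y => f y * iteratedDeriv j ν (y - s * x)) := by
    intro j hj s hs
    refine ((hBint s hs x).const_mul (F * A)).mono' ?_ (ae_of_all _ (hptw j hj s))
    exact (hfm.mul (((hcj j hj).measurable).comp (hmsub s))).aestronglyMeasurable
  have hIbdd : ∀ j, j ≤ Nat.floor r + 1 → ∀ s ∈ Set.Icc (-a₀) a₀,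
      |∫ y, f y * iteratedDeriv j ν (y - s * x)| ≤ F * A * (B * W x) := by
    intro j hj s hs
    have h1 : |∫ y, f y * iteratedDeriv j ν (y - s * x)|
        ≤ ∫ y, ‖f y * iteratedDeriv j ν (y - s * x)‖ := by
      simpa [Real.norm_eq_abs] using
        norm_integral_le_integral_norm (fun y => f y * iteratedDeriv j ν (y - s * x))
    have h2 : ∫ y, ‖f y * iteratedDeriv j ν (y - s * x)‖
        ≤ ∫ y, F * A * (W y * ν (y - s * x)) :=
      integral_mono (hII j hj s hs).norm ((hBint s hs x).const_mul (F * A)) (hptw j hj s)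
    have h3 : ∫ y, F * A * (W y * ν (y - s * x)) = F * A * ∫ y, W y * ν (y - s * x) :=
      integral_const_mul _ _
    have h4 : F * A * (∫ y, W y * ν (y - s * x)) ≤ F * A * (B * W x) := by
      have := hB s hs x
      have hFA : 0 ≤ F * A := by positivity
      exact mul_le_mul_of_nonneg_left this hFA
    linarith
  -- bound 1
  have harOp : ∀ j, j ≤ Nat.floor r + 1 → ∀ s ∈ Set.Icc (-a₀) a₀,
      |arOpD ν j s f x| ≤ |x| ^ j * (F * A * (B * W x)) := by
    intro j hj s hs
    rw [arOpD, abs_mul, abs_mul, abs_pow, abs_pow, abs_neg, abs_one, one_pow, one_mul]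
    exact mul_le_mul_of_nonneg_left (hIbdd j hj s hs) (by positivity)
  have hbd1 : |arOpD ν k α f x - arOpD ν k α' f x - (α - α') * arOpD ν (k + 1) α' f x|
      ≤ (2 * |x| ^ k + δ * |x| ^ (k + 1)) * (F * A * (B * W x)) := by
    have t1 := harOp k (by omega) α hmemα
    have t2 := harOp k (by omega) α' hmemα'
    have t3 := harOp (k + 1) (by omega) α' hmemα'
    have habs : |arOpD ν k α f x - arOpD ν k α' f x - (α - α') * arOpD ν (k + 1) α' f x|
        ≤ |arOpD ν k α f x| + |arOpD ν k α' f x| + δ * |arOpD ν (k + 1) α' f x| := by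
      calc |arOpD ν k α f x - arOpD ν k α' f x - (α - α') * arOpD ν (k + 1) α' f x|
          ≤ |arOpD ν k α f x - arOpD ν k α' f x| + |(α - α') * arOpD ν (k + 1) α' f x| :=
            abs_sub _ _
        _ ≤ |arOpD ν k α f x| + |arOpD ν k α' f x| + δ * |arOpD ν (k + 1) α' f x| := by
            rw [abs_mul, ← hδdef]
            linarith [abs_sub (arOpD ν k α f x) (arOpD ν k α' f x)]
    have hx1 : 0 ≤ |arOpD ν (k + 1) α' f x| := abs_nonneg _
    nlinarith [abs_nonneg (arOpD ν (k+1) α' f x), hδpos.le]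
  -- bound 2: Taylor with integral remainder
  have hd : ∀ j, j + 1 ≤ Nat.floor r + 1 → ∀ y s : ℝ,
      HasDerivAt (fun s : ℝ => iteratedDeriv j ν (y - s * x))
        (-x * iteratedDeriv (j + 1) ν (y - s * x)) s := by
    intro j hj y s
    have h1 : HasDerivAt (iteratedDeriv j ν) (iteratedDeriv (j + 1) ν (y - s * x))
        (y - s * x) := by
      rw [iteratedDeriv_succ]
      exact ((hdiffj j (by omega)) (y - s * x)).hasDerivAt
    have h2 : HasDerivAt (fun s : ℝ => y - s * x) (-x) s := by
      simpa using ((hasDerivAt_id s).mul_const x).const_sub y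
    have := h1.comp s h2
    simpa [Function.comp_def, mul_comm] using this
  set br : ℝ → ℝ := fun y => iteratedDeriv k ν (y - α * x) - iteratedDeriv k ν (y - α' * x)
      + (α - α') * (x * iteratedDeriv (k + 1) ν (y - α' * x)) with hbrdef
  have hbracket : ∀ y, br y
      = ∫ s in α'..α, (α - s) * (x ^ 2 * iteratedDeriv (k + 2) ν (y - s * x)) := by
    intro y
    have hg'2 : ∀ s : ℝ, HasDerivAt (fun s : ℝ => -x * iteratedDeriv (k + 1) ν (y - s * x))
        (x ^ 2 * iteratedDeriv (k + 2) ν (y - s * x)) s := by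
      intro s
      have := (hd (k + 1) (by omega) y s).const_mul (-x)
      rw [show k + 1 + 1 = k + 2 by omega] at this
      exact this.congr_deriv (by ring)
    have hc1 : Continuous fun s : ℝ => -x * iteratedDeriv (k + 1) ν (y - s * x) :=
      continuous_const.mul ((hcj (k + 1) (by omega)).comp (continuous_const.sub (continuous_id.mul continuous_const)))
    have hc2 : Continuous fun s : ℝ => x ^ 2 * iteratedDeriv (k + 2) ν (y - s * x) :=
      continuous_const.mul ((hcj (k + 2) (by omega)).comp (continuous_const.sub (continuous_id.mul continuous_const)))
    have h := taylor_aux (fun s : ℝ => iteratedDeriv k ν (y - s * x))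
      (fun s : ℝ => -x * iteratedDeriv (k + 1) ν (y - s * x))
      (fun s : ℝ => x ^ 2 * iteratedDeriv (k + 2) ν (y - s * x)) α' α
      (hd k (by omega) y) hg'2 hc1 hc2
    rw [hbrdef]
    dsimp only
    linear_combination h
  -- pointwise bound on the bracket
  have hbrabs : ∀ y, |br y| ≤ ∫ s in Set.Ioc m M, δ * (A * x ^ 2) * ν (y - s * x) := by
    intro y
    rw [hbracket y]
    have h1 : |∫ s in α'..α, (α - s) * (x ^ 2 * iteratedDeriv (k + 2) ν (y - s * x))|
        ≤ ∫ s in Set.uIoc α' α, |(α - s) * (x ^ 2 * iteratedDeriv (k + 2) ν (y - s * x))| := by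
      simpa only [Real.norm_eq_abs] using
        intervalIntegral.norm_integral_le_integral_norm_uIoc
          (a := α') (b := α) (μ := volume)
          (f := fun s => (α - s) * (x ^ 2 * iteratedDeriv (k + 2) ν (y - s * x)))
    have hIoc : Set.uIoc α' α = Set.Ioc m M := by
      rw [Set.uIoc, hmdef, hMdef, min_comm, max_comm]
    rw [hIoc] at h1
    refine h1.trans ?_
    refine setIntegral_mono_on ?_ ?_ measurableSet_Ioc ?_
    · refine (Continuous.integrableOn_Ioc ?_)
      have : Continuous fun s : ℝ => (α - s) * (x ^ 2 * iteratedDeriv (k + 2) ν (y - s * x)) :=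
        (continuous_const.sub continuous_id).mul
          (continuous_const.mul ((hcj (k + 2) (by omega)).comp (continuous_const.sub (continuous_id.mul continuous_const))))
      exact this.abs
    · exact Continuous.integrableOn_Ioc (continuous_const.mul (hνc.comp (continuous_const.sub (continuous_id.mul continuous_const))))
    · intro s hs
      have hsm : |α - s| ≤ δ := by
        have h1 : m ≤ α := min_le_left _ _
        have h2 : α ≤ M := le_max_left _ _
        rw [abs_le]
        constructor <;> [linarith [hs.2, hMm]; linarith [hs.1.le, hMm]]
      have h3 := hA (k + 2) (by omega) (y - s * x)
      have h4 := hpos (y - s * x)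
      rw [abs_mul, abs_mul, abs_pow, sq_abs]
      have e1 : |α - s| * (x ^ 2 * |iteratedDeriv (k + 2) ν (y - s * x)|)
          ≤ δ * (x ^ 2 * |iteratedDeriv (k + 2) ν (y - s * x)|) :=
        mul_le_mul_of_nonneg_right hsm (by positivity)
      have e2 : δ * (x ^ 2 * |iteratedDeriv (k + 2) ν (y - s * x)|)
          ≤ δ * (x ^ 2 * (A * ν (y - s * x))) :=
        mul_le_mul_of_nonneg_left (mul_le_mul_of_nonneg_left h3 (sq_nonneg x)) hδpos.le
      nlinarith [e1, e2]
  -- rewrite the LHS as a single integral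
  have hbr_split : (fun y => f y * br y) = fun y =>
      (f y * iteratedDeriv k ν (y - α * x) - f y * iteratedDeriv k ν (y - α' * x))
      + ((α - α') * x) * (f y * iteratedDeriv (k + 1) ν (y - α' * x)) := by
    funext y
    rw [hbrdef]
    ring
  have hbr_int : Integrable (fun y => f y * br y) := by
    rw [hbr_split]
    exact ((hII k (by omega) α hmemα).sub (hII k (by omega) α' hmemα')).add
      (((hII (k + 1) (by omega) α' hmemα').const_mul ((α - α') * x)))
  have hbr_intval : ∫ y, f y * br y
      = (∫ y, f y * iteratedDeriv k ν (y - α * x))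
        - (∫ y, f y * iteratedDeriv k ν (y - α' * x))
        + ((α - α') * x) * ∫ y, f y * iteratedDeriv (k + 1) ν (y - α' * x) := by
    rw [hbr_split]
    have i12 : Integrable (fun y =>
        f y * iteratedDeriv k ν (y - α * x) - f y * iteratedDeriv k ν (y - α' * x)) volume :=
      (hII k (by omega) α hmemα).sub (hII k (by omega) α' hmemα')
    have i3 : Integrable (fun y =>
        ((α - α') * x) * (f y * iteratedDeriv (k + 1) ν (y - α' * x))) volume :=
      (hII (k + 1) (by omega) α' hmemα').const_mul ((α - α') * x)
    rw [integral_add i12 i3,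
      integral_sub (hII k (by omega) α hmemα) (hII k (by omega) α' hmemα'),
      integral_const_mul]
  have hG_eq : arOpD ν k α f x - arOpD ν k α' f x - (α - α') * arOpD ν (k + 1) α' f x
      = (-1 : ℝ) ^ k * x ^ k * ∫ y, f y * br y := by
    rw [hbr_intval]
    simp only [arOpD]
    ring
  -- core estimate via Tonelli
  have hWm : Measurable W := by rw [hWdef]; measurability
  have hcore : ∫ y, |f y * br y| ≤ δ * (A * x ^ 2) * (F * (B * W x)) * δ := by
    have hnn : 0 ≤ δ * (A * x ^ 2) * (F * (B * W x)) * δ := by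
      have := hW1 x
      positivity
    rw [integral_eq_lintegral_of_nonneg_ae (ae_of_all _ fun y => abs_nonneg _)
      (hbr_int.abs.aestronglyMeasurable)]
    refine le_trans (ENNReal.toReal_mono ENNReal.ofReal_ne_top ?_)
      (le_of_eq (ENNReal.toReal_ofReal hnn))
    -- pointwise bound
    have step_ptw : ∀ y, ENNReal.ofReal |f y * br y|
        ≤ ENNReal.ofReal (δ * (A * x ^ 2))
          * ∫⁻ s in Set.Ioc m M, ENNReal.ofReal (F * W y * ν (y - s * x)) := by
      intro y
      have hψ : ∫ s in Set.Ioc m M, δ * (A * x ^ 2) * ν (y - s * x)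
          = δ * (A * x ^ 2) * ∫ s in Set.Ioc m M, ν (y - s * x) := integral_const_mul _ _
      have hψ2 : ∫ s in Set.Ioc m M, F * W y * ν (y - s * x)
          = F * W y * ∫ s in Set.Ioc m M, ν (y - s * x) := integral_const_mul _ _
      have hψnn : 0 ≤ ∫ s in Set.Ioc m M, ν (y - s * x) :=
        integral_nonneg fun s => (hpos _).le
      have h1 : |f y * br y| ≤ δ * (A * x ^ 2) * ∫ s in Set.Ioc m M, F * W y * ν (y - s * x) := by
        rw [hψ2]
        have e1 : |f y * br y| ≤ (F * W y) * |br y| := by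
          rw [abs_mul]
          refine mul_le_mul_of_nonneg_right (hf y) (abs_nonneg _)
        have e2 : |br y| ≤ δ * (A * x ^ 2) * ∫ s in Set.Ioc m M, ν (y - s * x) := by
          have := hbrabs y
          rwa [hψ] at this
        calc |f y * br y| ≤ (F * W y) * |br y| := e1
          _ ≤ (F * W y) * (δ * (A * x ^ 2) * ∫ s in Set.Ioc m M, ν (y - s * x)) := by
              refine mul_le_mul_of_nonneg_left e2 ?_
              have := hW1 y
              positivity
          _ = δ * (A * x ^ 2) * (F * W y * ∫ s in Set.Ioc m M, ν (y - s * x)) := by ring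
      have hIOn : Integrable (fun s => F * W y * ν (y - s * x))
          (volume.restrict (Set.Ioc m M)) :=
        Continuous.integrableOn_Ioc (continuous_const.mul
          (hνc.comp (continuous_const.sub (continuous_id.mul continuous_const))))
      have hOR : ENNReal.ofReal (∫ s in Set.Ioc m M, F * W y * ν (y - s * x))
          = ∫⁻ s in Set.Ioc m M, ENNReal.ofReal (F * W y * ν (y - s * x)) := by
        refine ofReal_integral_eq_lintegral_ofReal hIOn (ae_of_all _ fun s => ?_)
        have := hW1 y
        have := hpos (y - s * x)
        positivity
      calc ENNReal.ofReal |f y * br y|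
          ≤ ENNReal.ofReal (δ * (A * x ^ 2) * ∫ s in Set.Ioc m M, F * W y * ν (y - s * x)) :=
            ENNReal.ofReal_le_ofReal h1
        _ = ENNReal.ofReal (δ * (A * x ^ 2))
            * ENNReal.ofReal (∫ s in Set.Ioc m M, F * W y * ν (y - s * x)) :=
            ENNReal.ofReal_mul (by positivity)
        _ = _ := by rw [hOR]
    -- swap
    have hmprod : AEMeasurable
        (Function.uncurry fun y s => ENNReal.ofReal (F * W y * ν (y - s * x)))
        (volume.prod (volume.restrict (Set.Ioc m M))) := by
      refine Measurable.aemeasurable ?_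
      refine ENNReal.measurable_ofReal.comp ?_
      exact ((measurable_const.mul (hWm.comp measurable_fst)).mul
        (hνc.measurable.comp (measurable_fst.sub (measurable_snd.mul_const x))))
    have hinner : ∀ s ∈ Set.Ioc m M,
        ∫⁻ y, ENNReal.ofReal (F * W y * ν (y - s * x)) ≤ ENNReal.ofReal (F * (B * W x)) := by
      intro s hs
      have hs' : s ∈ Set.Icc (-a₀) a₀ := hsubIcc (Set.Ioc_subset_Icc_self hs)
      have hIny : Integrable (fun y => F * W y * ν (y - s * x)) := by
        have := (hBint s hs' x).const_mul F
        refine this.congr (ae_of_all _ fun y => by rw [hWdef]; ring)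
      have h1 : ∫⁻ y, ENNReal.ofReal (F * W y * ν (y - s * x))
          = ENNReal.ofReal (∫ y, F * W y * ν (y - s * x)) := by
        refine (ofReal_integral_eq_lintegral_ofReal hIny (ae_of_all _ fun y => ?_)).symm
        have := hW1 y
        have := hpos (y - s * x)
        positivity
      rw [h1]
      refine ENNReal.ofReal_le_ofReal ?_
      have h2 : ∫ y, F * W y * ν (y - s * x) = F * ∫ y, W y * ν (y - s * x) := by
        rw [← integral_const_mul]
        congr 1
        funext y
        ring
      rw [h2]
      exact mul_le_mul_of_nonneg_left (hB s hs' x) hF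
    calc ∫⁻ y, ENNReal.ofReal |f y * br y|
        ≤ ∫⁻ y, ENNReal.ofReal (δ * (A * x ^ 2))
            * ∫⁻ s in Set.Ioc m M, ENNReal.ofReal (F * W y * ν (y - s * x)) :=
          lintegral_mono step_ptw
      _ = ENNReal.ofReal (δ * (A * x ^ 2))
            * ∫⁻ y, ∫⁻ s in Set.Ioc m M, ENNReal.ofReal (F * W y * ν (y - s * x)) :=
          lintegral_const_mul' _ _ ENNReal.ofReal_ne_top
      _ = ENNReal.ofReal (δ * (A * x ^ 2))
            * ∫⁻ s in Set.Ioc m M, ∫⁻ y, ENNReal.ofReal (F * W y * ν (y - s * x)) := by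
          rw [lintegral_lintegral_swap hmprod]
      _ ≤ ENNReal.ofReal (δ * (A * x ^ 2))
            * ∫⁻ s in Set.Ioc m M, ENNReal.ofReal (F * (B * W x)) := by
          refine mul_le_mul_right ?_ _
          exact setLIntegral_mono measurable_const hinner
      _ = ENNReal.ofReal (δ * (A * x ^ 2)) * (ENNReal.ofReal (F * (B * W x)) * ENNReal.ofReal δ) := by
          rw [setLIntegral_const, Real.volume_Ioc, hMm]
      _ = ENNReal.ofReal (δ * (A * x ^ 2) * (F * (B * W x)) * δ) := by
          have hDnn : 0 ≤ F * (B * W x) := by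
            have h1 := hW1 x
            have h2 : (0:ℝ) ≤ B := by linarith
            have h3 : (0:ℝ) ≤ W x := by linarith
            positivity
          have hcnn : 0 ≤ δ * (A * x ^ 2) := by positivity
          have heq : ENNReal.ofReal (δ * (A * x ^ 2) * (F * (B * W x)) * δ)
              = ENNReal.ofReal (δ * (A * x ^ 2))
                * (ENNReal.ofReal (F * (B * W x)) * ENNReal.ofReal δ) := by
            rw [show δ * (A * x ^ 2) * (F * (B * W x)) * δ
                = δ * (A * x ^ 2) * (F * (B * W x) * δ) from by ring]
            rw [ENNReal.ofReal_mul hcnn, ENNReal.ofReal_mul hDnn]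
          exact heq.symm
  -- bound 2 concluded
  have hbd2 : |arOpD ν k α f x - arOpD ν k α' f x - (α - α') * arOpD ν (k + 1) α' f x|
      ≤ |x| ^ k * (δ * (A * x ^ 2) * (F * (B * W x)) * δ) := by
    rw [hG_eq, abs_mul, abs_mul, abs_pow, abs_pow, abs_neg, abs_one, one_pow, one_mul]
    have h1 : |∫ y, f y * br y| ≤ ∫ y, |f y * br y| := by
      have := norm_integral_le_integral_norm (μ := volume) (fun y => f y * br y)
      simpa only [Real.norm_eq_abs] using this
    exact mul_le_mul_of_nonneg_left (h1.trans hcore) (by positivity)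
  -- final arithmetic
  set u : ℝ := 1 + |x| with hudef
  have hupos : (0:ℝ) < u := by rw [hudef]; positivity
  have hu1 : (1:ℝ) ≤ u := by rw [hudef]; nlinarith [abs_nonneg x]
  have hxu : |x| ≤ u := by rw [hudef]; linarith
  have hWx : W x = u ^ (r * β) := by
    rw [hWdef]
    exact (Real.rpow_mul hupos.le r β).symm
  have hWx' : ((1 + |x|) ^ r) ^ β' = u ^ (r * β') := by
    rw [← hudef]
    exact (Real.rpow_mul hupos.le r β').symm
  have hexp : r * β' = r * β + ((k:ℝ) + 1) + σ := by rw [hσdef]; ring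
  have hsplit : u ^ (r * β') = u ^ (r * β) * u ^ ((k:ℝ) + 1) * u ^ σ := by
    rw [hexp, Real.rpow_add hupos, Real.rpow_add hupos]
  have huk1 : u ^ ((k:ℝ) + 1) = u ^ (k + 1 : ℕ) := by
    rw [show ((k:ℝ) + 1) = ((k + 1 : ℕ) : ℝ) by push_cast; ring, Real.rpow_natCast]
  have hBpos : (0:ℝ) < B := by linarith
  have hWxpos : (0:ℝ) < W x := by linarith [hW1 x]
  have target_eq : 2 * A * B * δ ^ ((1:ℝ) + σ) * F * ((1 + |x|) ^ r) ^ β'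
      = 2 * A * B * δ ^ ((1:ℝ) + σ) * F * (W x * u ^ (k + 1 : ℕ) * u ^ σ) := by
    rw [hWx', hsplit, huk1, hWx]
  rw [target_eq]
  have hδσpos : (0:ℝ) < δ ^ ((1:ℝ) + σ) := Real.rpow_pos_of_pos hδpos _
  have huσpos : (0:ℝ) < u ^ σ := Real.rpow_pos_of_pos hupos _
  rcases le_or_gt (δ * u) 2 with hcase | hcase
  · -- small δ: use bound 2
    have p1 : (|x|:ℝ) ^ (k + 2) ≤ u ^ (k + 2) := pow_le_pow_left₀ (abs_nonneg x) hxu _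
    have p2 : (u:ℝ) ^ (k + 2) = u ^ (k + 1 : ℕ) * u ^ σ * u ^ ((1:ℝ) - σ) := by
      rw [← huk1, ← Real.rpow_natCast u (k + 2), ← Real.rpow_add hupos, ← Real.rpow_add hupos]
      congr 1
      push_cast
      ring
    have p3 : δ * δ = δ ^ ((1:ℝ) + σ) * δ ^ ((1:ℝ) - σ) := by
      rw [← Real.rpow_add hδpos, show ((1:ℝ) + σ) + ((1:ℝ) - σ) = ((2:ℕ):ℝ) by push_cast; ring,
        Real.rpow_natCast]
      ring
    have p4 : δ ^ ((1:ℝ) - σ) * u ^ ((1:ℝ) - σ) ≤ 2 := by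
      rw [← Real.mul_rpow hδpos.le hupos.le]
      calc (δ * u) ^ ((1:ℝ) - σ) ≤ 2 ^ ((1:ℝ) - σ) :=
            Real.rpow_le_rpow (by positivity) hcase (by linarith [hσ.2])
        _ ≤ 2 ^ ((1:ℝ)) := Real.rpow_le_rpow_of_exponent_le one_le_two (by linarith [hσ.1])
        _ = 2 := Real.rpow_one 2
    have hδ1σpos : (0:ℝ) < δ ^ ((1:ℝ) - σ) := Real.rpow_pos_of_pos hδpos _
    have hu1σpos : (0:ℝ) < u ^ ((1:ℝ) - σ) := Real.rpow_pos_of_pos hupos _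
    have huk1pos : (0:ℝ) < u ^ (k + 1 : ℕ) := by positivity
    have key1 : δ * δ * |x| ^ (k + 2) ≤ 2 * δ ^ ((1:ℝ) + σ) * (u ^ (k + 1 : ℕ) * u ^ σ) := by
      calc δ * δ * |x| ^ (k + 2) ≤ δ * δ * u ^ (k + 2) := by
            refine mul_le_mul_of_nonneg_left p1 (by positivity)
        _ = δ ^ ((1:ℝ) + σ) * (u ^ (k + 1 : ℕ) * u ^ σ) * (δ ^ ((1:ℝ) - σ) * u ^ ((1:ℝ) - σ)) := by
            rw [p3, p2]; ring
        _ ≤ δ ^ ((1:ℝ) + σ) * (u ^ (k + 1 : ℕ) * u ^ σ) * 2 := by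
            refine mul_le_mul_of_nonneg_left p4 (by positivity)
        _ = 2 * δ ^ ((1:ℝ) + σ) * (u ^ (k + 1 : ℕ) * u ^ σ) := by ring
    have heq2 : |x| ^ k * (δ * (A * x ^ 2) * (F * (B * W x)) * δ)
        = (A * B * F * W x) * (δ * δ * |x| ^ (k + 2)) := by
      rw [← sq_abs x]
      ring
    have hfinal : (A * B * F * W x) * (δ * δ * |x| ^ (k + 2))
        ≤ (A * B * F * W x) * (2 * δ ^ ((1:ℝ) + σ) * (u ^ (k + 1 : ℕ) * u ^ σ)) := by
      refine mul_le_mul_of_nonneg_left key1 (by positivity)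
    calc |arOpD ν k α f x - arOpD ν k α' f x - (α - α') * arOpD ν (k + 1) α' f x|
        ≤ |x| ^ k * (δ * (A * x ^ 2) * (F * (B * W x)) * δ) := hbd2
      _ = (A * B * F * W x) * (δ * δ * |x| ^ (k + 2)) := heq2
      _ ≤ (A * B * F * W x) * (2 * δ ^ ((1:ℝ) + σ) * (u ^ (k + 1 : ℕ) * u ^ σ)) := hfinal
      _ = 2 * A * B * δ ^ ((1:ℝ) + σ) * F * (W x * u ^ (k + 1 : ℕ) * u ^ σ) := by ring
  · -- large δ: use bound 1
    have q0 : (0:ℝ) < u ^ (k + 1 : ℕ) := by positivity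
    have q1 : (|x|:ℝ) ^ k ≤ u ^ k := pow_le_pow_left₀ (abs_nonneg x) hxu _
    have q1' : (|x|:ℝ) ^ (k + 1) ≤ u ^ (k + 1) := pow_le_pow_left₀ (abs_nonneg x) hxu _
    have q2 : 2 * u ^ k ≤ δ * u ^ (k + 1 : ℕ) := by
      have : δ * u ^ (k + 1 : ℕ) = (δ * u) * u ^ k := by rw [pow_succ]; ring
      rw [this]
      have hupk : (0:ℝ) < u ^ k := by positivity
      nlinarith [hcase.le]
    have q3 : δ ≤ δ ^ ((1:ℝ) + σ) * u ^ σ := by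
      have h1 : δ ^ ((1:ℝ) + σ) = δ * δ ^ σ := by
        rw [Real.rpow_add hδpos, Real.rpow_one]
      have h2 : (1:ℝ) ≤ δ ^ σ * u ^ σ := by
        rw [← Real.mul_rpow hδpos.le hupos.le]
        exact Real.one_le_rpow (by nlinarith) hσ.1.le
      calc δ = δ * 1 := (mul_one δ).symm
        _ ≤ δ * (δ ^ σ * u ^ σ) := mul_le_mul_of_nonneg_left h2 hδpos.le
        _ = δ ^ ((1:ℝ) + σ) * u ^ σ := by rw [h1]; ring
    have key2 : 2 * |x| ^ k + δ * |x| ^ (k + 1)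
        ≤ 2 * δ ^ ((1:ℝ) + σ) * (u ^ (k + 1 : ℕ) * u ^ σ) := by
      have s1 : 2 * |x| ^ k + δ * |x| ^ (k + 1) ≤ 2 * (δ * u ^ (k + 1 : ℕ)) := by
        have : δ * |x| ^ (k + 1) ≤ δ * u ^ (k + 1) :=
          mul_le_mul_of_nonneg_left q1' hδpos.le
        nlinarith [q1, q2]
      have s2 : δ * u ^ (k + 1 : ℕ) ≤ δ ^ ((1:ℝ) + σ) * u ^ σ * u ^ (k + 1 : ℕ) :=
        mul_le_mul_of_nonneg_right q3 q0.le
      calc 2 * |x| ^ k + δ * |x| ^ (k + 1) ≤ 2 * (δ * u ^ (k + 1 : ℕ)) := s1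
        _ ≤ 2 * (δ ^ ((1:ℝ) + σ) * u ^ σ * u ^ (k + 1 : ℕ)) := by linarith [s2]
        _ = 2 * δ ^ ((1:ℝ) + σ) * (u ^ (k + 1 : ℕ) * u ^ σ) := by ring
    have hFA : (0:ℝ) ≤ F * A * (B * W x) := by positivity
    calc |arOpD ν k α f x - arOpD ν k α' f x - (α - α') * arOpD ν (k + 1) α' f x|
        ≤ (2 * |x| ^ k + δ * |x| ^ (k + 1)) * (F * A * (B * W x)) := hbd1
      _ ≤ (2 * δ ^ ((1:ℝ) + σ) * (u ^ (k + 1 : ℕ) * u ^ σ)) * (F * A * (B * W x)) :=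
          mul_le_mul_of_nonneg_right key2 hFA
      _ = 2 * A * B * δ ^ ((1:ℝ) + σ) * F * (W x * u ^ (k + 1 : ℕ) * u ^ σ) := by ring
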